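/- Let n ≥ 3, let α, β be distinct positive roots of A_{n−1}, and let w ∈ S_n be such that w·(−2α−β) = w(−2α−β+ρ) − ρ is dominant and nonzero. Then w(α) = −α_0, where α_0 = e_1 − e_n is the highest root, w(β) is a negative root, ℓ(w) = 2, the set {γ positive : w⁻¹(γ) negative} equals {α_0, −w(β)}, and w·(−2α−β) = α_0. -/

import Mathlib

/-- ρ = (n−1, n−2, …, 1, 0) for type A_{n−1} realized in ℤ^n. -/
def weylRho (n : ℕ) : Fin n → ℤ := fun i => (n : ℤ) - 1 - (i : ℕ)

/-- The action of `w ∈ S_n` on weights: `w(λ)_i = λ_{w⁻¹(i)}`. -/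
def wAct {n : ℕ} (w : Equiv.Perm (Fin n)) (lam : Fin n → ℤ) : Fin n → ℤ :=
  fun i => lam (w⁻¹ i)

/-- The dot action `w·λ = w(λ+ρ) − ρ`. -/
def dotAct {n : ℕ} (w : Equiv.Perm (Fin n)) (lam : Fin n → ℤ) : Fin n → ℤ :=
  fun i => lam (w⁻¹ i) + weylRho n (w⁻¹ i) - weylRho n i

/-- `λ` is dominant iff `λ_1 ≥ λ_2 ≥ ⋯ ≥ λ_n`. -/
def IsDominant {n : ℕ} (lam : Fin n → ℤ) : Prop :=
  ∀ i j : Fin n, i ≤ j → lam j ≤ lam i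

/-- The root `e_i − e_j`. -/
def posRoot {n : ℕ} (i j : Fin n) : Fin n → ℤ :=
  fun k => (if k = i then 1 else 0) - (if k = j then 1 else 0)

/-- Positive roots of A_{n−1}: `e_i − e_j` with `i < j`. -/
def IsPosRoot {n : ℕ} (x : Fin n → ℤ) : Prop :=
  ∃ i j : Fin n, i < j ∧ x = posRoot i j

/-- Negative roots of A_{n−1}. -/
def IsNegRoot {n : ℕ} (x : Fin n → ℤ) : Prop :=
  ∃ i j : Fin n, i < j ∧ x = -(posRoot i j)

/-- The length ℓ(w): the number of positive roots sent to negative roots by `w`,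
i.e. the number of inversions of `w`. -/
def weylLen {n : ℕ} (w : Equiv.Perm (Fin n)) : ℕ :=
  (Finset.univ.filter (fun p : Fin n × Fin n => p.1 < p.2 ∧ w p.2 < w p.1)).card

instance {n : ℕ} (lam : Fin n → ℤ) : Decidable (IsDominant lam) :=
  inferInstanceAs (Decidable (∀ i j : Fin n, i ≤ j → lam j ≤ lam i))
instance {n : ℕ} (x : Fin n → ℤ) : Decidable (IsPosRoot x) :=
  inferInstanceAs (Decidable (∃ i j : Fin n, i < j ∧ x = posRoot i j))
instance {n : ℕ} (x : Fin n → ℤ) : Decidable (IsNegRoot x) :=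
  inferInstanceAs (Decidable (∃ i j : Fin n, i < j ∧ x = -(posRoot i j)))

set_option maxRecDepth 10000 in
lemma core3 : ∀ (w : Equiv.Perm (Fin 3)) (a b c d : Fin 3), a < b → c < d → ¬(a = c ∧ b = d) →
    IsDominant (dotAct w (-(2 • posRoot a b) - posRoot c d)) →
    dotAct w (-(2 • posRoot a b) - posRoot c d) ≠ 0 →
    (wAct w (posRoot a b) = -(posRoot (⟨0, by omega⟩ : Fin 3) (⟨2, by omega⟩ : Fin 3)) ∧
     IsNegRoot (wAct w (posRoot c d)) ∧
     weylLen w = 2 ∧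
     (∀ i j : Fin 3, i < j → (IsNegRoot (wAct w⁻¹ (posRoot i j)) ↔
        (posRoot i j = posRoot (⟨0, by omega⟩ : Fin 3) (⟨2, by omega⟩ : Fin 3) ∨
         posRoot i j = -(wAct w (posRoot c d))))) ∧
     IsPosRoot (-(wAct w (posRoot c d))) ∧
     dotAct w (-(2 • posRoot a b) - posRoot c d) =
       posRoot (⟨0, by omega⟩ : Fin 3) (⟨2, by omega⟩ : Fin 3)) := by decide

lemma forall_x_bridge {n : ℕ} (w : Equiv.Perm (Fin n)) (P Q : Fin n → ℤ)
    (h : ∀ i j : Fin n, i < j → (IsNegRoot (wAct w⁻¹ (posRoot i j)) ↔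
      (posRoot i j = P ∨ posRoot i j = Q)))
    (hP : IsPosRoot P) (hQ : IsPosRoot Q) :
    ∀ x : Fin n → ℤ, (IsPosRoot x ∧ IsNegRoot (wAct w⁻¹ x)) ↔ (x = P ∨ x = Q) := by
  intro x
  constructor
  · rintro ⟨⟨i, j, hij, rfl⟩, hneg⟩
    exact (h i j hij).1 hneg
  · rintro (rfl | rfl)
    · obtain ⟨i, j, hij, hx⟩ := hP
      exact ⟨⟨i, j, hij, hx⟩, by rw [hx]; exact (h i j hij).2 (Or.inl hx.symm)⟩
    · obtain ⟨i, j, hij, hx⟩ := hQ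
      exact ⟨⟨i, j, hij, hx⟩, by rw [hx]; exact (h i j hij).2 (Or.inr hx.symm)⟩

lemma sum_posRoot {n : ℕ} (i j : Fin n) : ∑ k, posRoot i j k = 0 := by
  simp [posRoot, Finset.sum_sub_distrib]

/-- Structure of w when w·(−2α−β) is dominant and nonzero (α ≠ β positive roots):
w(α) = −α₀, w(β) is negative, ℓ(w) = 2, Φ_w = {α₀, −w(β)}, and w·(−2α−β) = α₀. -/
theorem dot_neg_twoalpha_beta_structure (n : ℕ) (hn : 3 ≤ n) (α β : Fin n → ℤ)
    (hα : IsPosRoot α) (hβ : IsPosRoot β) (hne : α ≠ β) (w : Equiv.Perm (Fin n))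
    (hdom : IsDominant (dotAct w (-(2 • α) - β)))
    (hnz : dotAct w (-(2 • α) - β) ≠ 0) :
    wAct w α = -(posRoot (⟨0, by omega⟩ : Fin n) (⟨n - 1, by omega⟩ : Fin n)) ∧
    IsNegRoot (wAct w β) ∧
    weylLen w = 2 ∧
    (∀ x : Fin n → ℤ, (IsPosRoot x ∧ IsNegRoot (wAct w⁻¹ x)) ↔
      (x = posRoot (⟨0, by omega⟩ : Fin n) (⟨n - 1, by omega⟩ : Fin n) ∨ x = -(wAct w β))) ∧
    dotAct w (-(2 • α) - β) = posRoot (⟨0, by omega⟩ : Fin n) (⟨n - 1, by omega⟩ : Fin n) := by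
  obtain ⟨a, b, hab, rfl⟩ := hα
  obtain ⟨c, d, hcd, rfl⟩ := hβ
  have hne' : ¬(a = c ∧ b = d) := by
    rintro ⟨rfl, rfl⟩; exact hne rfl
  -- the key case split on n
  by_cases hn3 : n = 3
  · subst hn3
    obtain ⟨h1, h2, h3, h4, h5, h6⟩ := core3 w a b c d hab hcd hne' hdom hnz
    exact ⟨h1, h2, h3, forall_x_bridge w _ _ h4
      ⟨⟨0, by omega⟩, ⟨2, by omega⟩, by simp [Fin.lt_def], rfl⟩ h5, h6⟩
  · exfalso
    have hn4 : 4 ≤ n := by omega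
    set lam : Fin n → ℤ := -(2 • posRoot a b) - posRoot c d with hlam
    set m : Fin n → ℤ := fun k => lam k + weylRho n k with hm
    have hmval : ∀ k : Fin n, m k = (n : ℤ) - 1 - (k : ℕ)
        - 2 * ((if (k : ℕ) = (a : ℕ) then 1 else 0) - (if (k : ℕ) = (b : ℕ) then 1 else 0))
        - ((if (k : ℕ) = (c : ℕ) then 1 else 0) - (if (k : ℕ) = (d : ℕ) then 1 else 0)) := by
      intro k
      simp only [hm, hlam, posRoot, weylRho, Pi.sub_apply, Pi.neg_apply, Pi.smul_apply,
        smul_eq_mul, Fin.ext_iff]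
      ring
    have hne'' : ¬((a : ℕ) = c ∧ (b : ℕ) = d) := by
      rintro ⟨h1, h2⟩
      exact hne' ⟨Fin.ext h1, Fin.ext h2⟩
    have hab' : (a : ℕ) < b := hab
    have hcd' : (c : ℕ) < d := hcd
    -- bounds
    have hlb : ∀ k : Fin n, (-1 : ℤ) ≤ m k := by
      intro k
      rw [hmval k]
      have := k.isLt; have := a.isLt; have := b.isLt; have := c.isLt; have := d.isLt
      split_ifs <;> omega
    have hub : ∀ k : Fin n, m k ≤ (n : ℤ) := by
      intro k
      rw [hmval k]
      have := k.isLt; have := a.isLt; have := b.isLt; have := c.isLt; have := d.isLt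
      split_ifs <;> omega
    -- the gap inequality from dominance
    have hgap : ∀ i j : Fin n, (i : ℕ) ≤ (j : ℕ) →
        m (w⁻¹ j) + ((j : ℕ) : ℤ) - ((i : ℕ) : ℤ) ≤ m (w⁻¹ i) := by
      intro i j hij
      have h := hdom i j hij
      simp only [dotAct, weylRho] at h
      simp only [hm, weylRho]
      omega
    set i0 : Fin n := ⟨0, by omega⟩ with hi0
    set iN : Fin n := ⟨n - 1, by omega⟩ with hiN
    -- sum identity
    have hsum : ∑ i, m (w⁻¹ i) = ∑ i, weylRho n i := by
      rw [Equiv.sum_comp w⁻¹ m]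
      simp only [hm, hlam, Finset.sum_add_distrib]
      have h1 : ∑ k, (-(2 • posRoot a b) - posRoot c d) k
          = -(2 * ∑ k, posRoot a b k) - ∑ k, posRoot c d k := by
        simp [Finset.sum_sub_distrib, Finset.mul_sum, Finset.sum_neg_distrib]
      rw [h1, sum_posRoot, sum_posRoot]
      ring
    by_cases H1 : ∃ p, m p = -1 <;> by_cases H2 : ∃ q, m q = (n : ℤ)
    · -- both: impossible for n ≥ 4
      obtain ⟨p, hp⟩ := H1
      obtain ⟨q, hq⟩ := H2
      rw [hmval p] at hp
      rw [hmval q] at hq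
      have := p.isLt; have := q.isLt; have := a.isLt; have := b.isLt
      have := c.isLt; have := d.isLt
      split_ifs at hp hq <;> omega
    · -- -1 attained, n not attained
      obtain ⟨p, hp⟩ := H1
      push_neg at H2
      have hi0v : (i0 : ℕ) = 0 := rfl
      have hple : ∀ i : Fin n, m (w⁻¹ i) ≤ weylRho n i := by
        intro i
        have h1 := hgap i0 i (by omega)
        have h2 := hub (w⁻¹ i0)
        have h3 := H2 (w⁻¹ i0)
        have := i.isLt
        simp only [weylRho]
        omega
      have hiNv : (iN : ℕ) = n - 1 := rfl
      have hpN : m (w⁻¹ iN) = -1 := by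
        by_cases hwp : w p = iN
        · rw [← hwp, (by simp : w⁻¹ (w p) = p)]; exact hp
        · have h1 := hgap (w p) iN (by have := (w p).isLt; omega)
          rw [(by simp : w⁻¹ (w p) = p), hp] at h1
          have h2 := hlb (w⁻¹ iN)
          have hwp' : (w p : ℕ) ≠ (iN : ℕ) := fun h => hwp (Fin.ext h)
          have := (w p).isLt
          omega
      have : ∑ i, m (w⁻¹ i) < ∑ i, weylRho n i := by
        apply Finset.sum_lt_sum (fun i _ => hple i)
        refine ⟨iN, Finset.mem_univ _, ?_⟩
        rw [hpN]
        simp only [weylRho]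
        omega
      omega
    · -- n attained, -1 not attained
      obtain ⟨q, hq⟩ := H2
      push_neg at H1
      have hiNv : (iN : ℕ) = n - 1 := rfl
      have hi0v : (i0 : ℕ) = 0 := rfl
      have hpge : ∀ i : Fin n, weylRho n i ≤ m (w⁻¹ i) := by
        intro i
        have h1 := hgap i iN (by have := i.isLt; omega)
        have h2 := hlb (w⁻¹ iN)
        have h3 := H1 (w⁻¹ iN)
        have := i.isLt
        simp only [weylRho]
        omega
      have hq0 : m (w⁻¹ i0) = (n : ℤ) := by
        by_cases hwq : w q = i0
        · rw [← hwq, (by simp : w⁻¹ (w q) = q)]; exact hq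
        · have h1 := hgap i0 (w q) (by omega)
          rw [(by simp : w⁻¹ (w q) = q), hq] at h1
          have h2 := hub (w⁻¹ i0)
          have hwq' : (w q : ℕ) ≠ (i0 : ℕ) := fun h => hwq (Fin.ext h)
          omega
      have : ∑ i, weylRho n i < ∑ i, m (w⁻¹ i) := by
        apply Finset.sum_lt_sum (fun i _ => hpge i)
        refine ⟨i0, Finset.mem_univ _, ?_⟩
        rw [hq0]
        simp only [weylRho]
        omega
      omega
    · -- neither: μ = 0
      push_neg at H1
      push_neg at H2
      have hiNv : (iN : ℕ) = n - 1 := rfl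
      have hi0v : (i0 : ℕ) = 0 := rfl
      apply hnz
      funext i
      have h1 := hgap i0 i (by omega)
      have h2 := hgap i iN (by have := i.isLt; omega)
      have h3 := hub (w⁻¹ i0)
      have h4 := H2 (w⁻¹ i0)
      have h5 := hlb (w⁻¹ iN)
      have h6 := H1 (w⁻¹ iN)
      have h7 : m (w⁻¹ i) = weylRho n i := by
        have := i.isLt
        simp only [weylRho] at h1 h2 h3 h4 h5 h6 ⊢
        omega
      simp only [dotAct, Pi.zero_apply]
      simp only [hm, weylRho] at h7 ⊢
      omega
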